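/- Let M̃ be a nonempty closed affine subset of a Hilbert space H and T : M̃ → M̃ a nonexpansive operator with Fix(T) ≠ ∅. Let x⁰, x¹ ∈ M̃ be arbitrary and consider the iteration x^{k+1} = x^k + α_k(x^k − x^{k−1}) + ρ_k[T(x^k + α_k(x^k − x^{k−1})) − x^k − α_k(x^k − x^{k−1})], where (α_k) and (ρ_k) satisfy the inertial parameter condition. Then (i) Σ_{k∈ℕ} ‖x^{k+1} − x^k‖² < +∞, and (ii) (x^k)_{k∈ℕ} converges weakly to a point in Fix(T). -/

import Mathlib

open Filter Topology Set
open scoped InnerProductSpace RealInnerProductSpace Pointwise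

noncomputable section

/-- The inertial parameter condition on the extrapolation parameters `αs` and the
relaxation parameters `ρs`. -/
def InertialCond (αs ρs : ℕ → ℝ) : Prop :=
  ∃ α ρ θ δ : ℝ,
    Monotone αs ∧ αs 1 = 0 ∧ (∀ k, 1 ≤ k → 0 ≤ αs k ∧ αs k ≤ α) ∧ 0 ≤ α ∧ α < 1 ∧
    0 < ρ ∧ 0 < θ ∧ 0 < δ ∧
    (α ^ 2 * (1 + α) + α * θ) / (1 - α ^ 2) < δ ∧
    (∀ k, 1 ≤ k → ρ ≤ ρs k ∧
      ρs k < (δ - α * (α * (1 + α) + α * δ + θ)) / (δ * (1 + α * (1 + α) + α * δ + θ)))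

variable {H : Type*} [NormedAddCommGroup H] [InnerProductSpace ℝ H]

/-- `g` is a proper, lower semicontinuous, convex function with values in `(-∞, +∞]`. -/
def Gamma0 (g : H → EReal) : Prop :=
  (∃ x, g x ≠ ⊤) ∧ (∀ x, g x ≠ ⊥) ∧ LowerSemicontinuous g ∧
  ∀ x y : H, ∀ a b : ℝ, 0 ≤ a → 0 ≤ b → a + b = 1 →
    g (a • x + b • y) ≤ (a : EReal) * g x + (b : EReal) * g y

/-- The Legendre–Fenchel conjugate of `h`. -/
def fenchel (h : H → EReal) (y : H) : EReal :=
  ⨆ x : H, ((⟪y, x⟫_ℝ : ℝ) : EReal) - h x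

/-- `p = prox_{τ g}(u)`, i.e. `p` minimizes `w ↦ g w + ‖u - w‖² / (2τ)`. -/
def IsProx (g : H → EReal) (τ : ℝ) (u p : H) : Prop :=
  ∀ w, g p + ((1 / (2 * τ) * ‖u - p‖ ^ 2 : ℝ) : EReal) ≤
    g w + ((1 / (2 * τ) * ‖u - w‖ ^ 2 : ℝ) : EReal)

/-- `p = prox_{S g}(u)` for a positive definite map `S` with inverse `Sinv`, i.e. `p`
minimizes `w ↦ g w + (1/2) ⟪S⁻¹ (u - w), u - w⟫`. -/
def IsProxOp (g : H → EReal) (Sinv : H →L[ℝ] H) (u p : H) : Prop :=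
  ∀ w, g p + ((1 / 2 * ⟪Sinv (u - p), u - p⟫_ℝ : ℝ) : EReal) ≤
    g w + ((1 / 2 * ⟪Sinv (u - w), u - w⟫_ℝ : ℝ) : EReal)

/-- `B` is cocoercive with respect to `Linv = L⁻¹`. -/
def CocoerciveWrt (B : H → H) (Linv : H →L[ℝ] H) : Prop :=
  ∀ x y : H, ⟪Linv (B x - B y), B x - B y⟫_ℝ ≤ ⟪B x - B y, x - y⟫_ℝ

/-- `L` is a selfadjoint positive definite (bounded linear) map. -/
def PosDefSA (L : H →L[ℝ] H) : Prop :=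
  (∀ x y : H, ⟪L x, y⟫_ℝ = ⟪x, L y⟫_ℝ) ∧ ∀ x : H, x ≠ 0 → 0 < ⟪L x, x⟫_ℝ

/-- `Linv` is a two-sided inverse of `L`. -/
def InvPair (L Linv : H →L[ℝ] H) : Prop :=
  (∀ x, L (Linv x) = x) ∧ (∀ x, Linv (L x) = x)

/-- The subdifferential of an extended-real-valued convex function. -/
def subdiff (g : H → EReal) (x : H) : Set H :=
  {u | ∀ z, g x + ((⟪u, z - x⟫_ℝ : ℝ) : EReal) ≤ g z}

/-- The diagonal operator on `EuclideanSpace ℝ (Fin q)` with diagonal entries `t`. -/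
def diagOp {q : ℕ} (t : Fin q → ℝ) :
    EuclideanSpace ℝ (Fin q) →L[ℝ] EuclideanSpace ℝ (Fin q) :=
  LinearMap.toContinuousLinearMap
  { toFun := fun x => WithLp.toLp 2 (fun i => t i * x i)
    map_add' := by intro x y; ext i; simp [mul_add]
    map_smul' := by intro c x; ext i; simp [smul_eq_mul] <;> ring }

end


/-- A nonnegative sequence satisfying a quasi-monotonicity inequality with summable
errors converges. -/
lemma phi_converges (φ γ : ℕ → ℝ) (a : ℝ) (ha0 : 0 ≤ a) (ha1 : a < 1)
    (hφ : ∀ k, 0 ≤ φ k) (hγ0 : ∀ k, 0 ≤ γ k) (hγ : Summable γ)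
    (key : ∀ k, 1 ≤ k → φ (k + 1) - φ k ≤ a * max (φ k - φ (k - 1)) 0 + γ k) :
    ∃ l, Tendsto φ atTop (𝓝 l) := by
  set θ : ℕ → ℝ := fun k => max (φ (k + 1) - φ k) 0 with hθdef
  have hθ0 : ∀ k, 0 ≤ θ k := fun k => le_max_right _ _
  have hθrec : ∀ j, θ (j + 1) ≤ a * θ j + γ (j + 1) := by
    intro j
    have h1 := key (j + 1) (Nat.le_add_left 1 j)
    simp only [Nat.add_sub_cancel] at h1
    have h2 : 0 ≤ a * θ j + γ (j + 1) :=
      add_nonneg (mul_nonneg ha0 (hθ0 j)) (hγ0 (j + 1))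
    exact max_le h1 h2
  -- partial sums of θ are bounded
  have hγle : ∀ n, ∑ j ∈ Finset.range n, γ (j + 1) ≤ ∑' k, γ k := by
    intro n
    calc ∑ j ∈ Finset.range n, γ (j + 1) = ∑ j ∈ Finset.range (n+1), γ j - γ 0 := by
          rw [Finset.sum_range_succ' (fun j => γ j) n]; ring
      _ ≤ ∑' k, γ k - 0 := by
          gcongr
          · exact Summable.sum_le_tsum _ (fun i _ => hγ0 i) hγ
          · exact hγ0 0
      _ = ∑' k, γ k := by ring
  have hγ0t : (0:ℝ) ≤ ∑' k, γ k := tsum_nonneg hγ0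
  have hSbound : ∀ n, ∑ j ∈ Finset.range n, θ (j + 1) ≤ (a * θ 0 + ∑' k, γ k) / (1 - a) := by
    intro n
    have hmono : Monotone (fun n => ∑ j ∈ Finset.range n, θ (j + 1)) := by
      intro m n hmn
      exact Finset.sum_le_sum_of_subset_of_nonneg (Finset.range_subset_range.2 hmn)
        (fun i _ _ => hθ0 _)
    set S : ℕ → ℝ := fun n => ∑ j ∈ Finset.range n, θ (j + 1) with hS
    have hSrec : S n ≤ a * θ 0 + a * S n + ∑' k, γ k := by
      calc S n ≤ ∑ j ∈ Finset.range n, (a * θ j + γ (j + 1)) :=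
            Finset.sum_le_sum (fun j _ => hθrec j)
        _ = a * (∑ j ∈ Finset.range n, θ j) + ∑ j ∈ Finset.range n, γ (j + 1) := by
            rw [Finset.sum_add_distrib, Finset.mul_sum]
        _ ≤ a * (θ 0 + S n) + ∑' k, γ k := by
            gcongr
            · cases n with
              | zero => simp [hS, hθ0 0]
              | succ m =>
                rw [Finset.sum_range_succ' (fun j => θ j) m]
                have h5 : S m ≤ S (m + 1) := hmono (Nat.le_succ m)
                have h6 : S m = ∑ j ∈ Finset.range m, θ (j + 1) := rfl
                linarith
            · exact hγle n
        _ = a * θ 0 + a * S n + ∑' k, γ k := by ring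
    have h1a : 0 < 1 - a := by linarith
    show S n ≤ (a * θ 0 + ∑' k, γ k) / (1 - a)
    rw [le_div_iff₀ h1a]
    nlinarith [hSrec]
  have hθsum : Summable (fun j => θ (j + 1)) :=
    summable_of_sum_range_le (fun n => hθ0 _) hSbound
  have hθsum' : Summable θ := by
    rw [← summable_nat_add_iff 1]; exact hθsum
  -- ψ is antitone and bounded below
  set ψ : ℕ → ℝ := fun k => φ k - ∑ j ∈ Finset.range k, θ j with hψ
  have hψanti : Antitone ψ := by
    apply antitone_nat_of_succ_le
    intro n
    have : φ (n + 1) - φ n ≤ θ n := le_max_left _ _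
    simp only [hψ, Finset.sum_range_succ]
    linarith
  have hψbdd : BddBelow (Set.range ψ) := by
    refine ⟨-∑' j, θ j, ?_⟩
    rintro y ⟨k, rfl⟩
    have h1 : ∑ j ∈ Finset.range k, θ j ≤ ∑' j, θ j :=
      Summable.sum_le_tsum _ (fun i _ => hθ0 i) hθsum'
    have := hφ k
    simp only [hψ]
    linarith
  have hψlim : Tendsto ψ atTop (𝓝 (⨅ k, ψ k)) := tendsto_atTop_ciInf hψanti hψbdd
  have hsumlim : Tendsto (fun k => ∑ j ∈ Finset.range k, θ j) atTop (𝓝 (∑' j, θ j)) :=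
    hθsum'.hasSum.tendsto_sum_nat
  refine ⟨(⨅ k, ψ k) + ∑' j, θ j, ?_⟩
  have : φ = fun k => ψ k + ∑ j ∈ Finset.range k, θ j := by
    funext k; simp [hψ]
  rw [this]
  exact hψlim.add hsumlim


lemma ultrafilter_lim_exists (U : Ultrafilter ℕ) (f : ℕ → ℝ) (C : ℝ)
    (hf : ∀ n, |f n| ≤ C) : ∃ c, Tendsto f (↑U) (𝓝 c) := by
  have h1 : ↑(U.map f) ≤ Filter.principal (Set.Icc (-C) C) := by
    rw [Ultrafilter.coe_map, Filter.le_principal_iff, Filter.mem_map]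
    have : (f ⁻¹' Set.Icc (-C) C) = Set.univ := by
      ext n; simp [Set.mem_Icc, abs_le.mp (hf n)]
    rw [this]; exact Filter.univ_mem
  obtain ⟨c, _, hc⟩ := isCompact_Icc.ultrafilter_le_nhds (U.map f) h1
  exact ⟨c, by rwa [Ultrafilter.coe_map] at hc⟩

lemma weak_cluster {H : Type*} [NormedAddCommGroup H] [InnerProductSpace ℝ H]
    [CompleteSpace H]
    (M : Set H) (hM_ne : M.Nonempty) (hM_closed : IsClosed M) (hM_conv : Convex ℝ M)
    (T : H → H) (hT_maps : ∀ x ∈ M, T x ∈ M)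
    (hT_nonexp : ∀ x ∈ M, ∀ y ∈ M, ‖T x - T y‖ ≤ ‖x - y‖)
    (x : ℕ → H) (hxM : ∀ k, x k ∈ M) (R : ℝ) (hR : ∀ k, ‖x k‖ ≤ R)
    (hres : Tendsto (fun k => ‖T (x k) - x k‖) atTop (𝓝 0))
    (U : Ultrafilter ℕ) (hU : ↑U ≤ (atTop : Filter ℕ)) :
    ∃ p ∈ M, T p = p ∧ ∀ v : H, Tendsto (fun k => ⟪x k, v⟫_ℝ) (↑U) (𝓝 ⟪p, v⟫_ℝ) := by
  have hR0 : 0 ≤ R := le_trans (norm_nonneg _) (hR 0)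
  have hbound : ∀ v : H, ∀ k, |⟪x k, v⟫_ℝ| ≤ R * ‖v‖ := fun v k =>
    le_trans (abs_real_inner_le_norm _ _) (by gcongr; exact hR k)
  have hex : ∀ v : H, ∃ c, Tendsto (fun k => ⟪x k, v⟫_ℝ) (↑U) (𝓝 c) := fun v =>
    ultrafilter_lim_exists U _ (R * ‖v‖) (hbound v)
  choose L hL using hex
  have hLadd : ∀ v w, L (v + w) = L v + L w := by
    intro v w
    refine tendsto_nhds_unique (hL (v + w)) ?_
    have : (fun k => ⟪x k, v + w⟫_ℝ) = fun k => ⟪x k, v⟫_ℝ + ⟪x k, w⟫_ℝ := by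
      funext k; exact inner_add_right _ _ _
    rw [this]; exact (hL v).add (hL w)
  have hLsmul : ∀ (c : ℝ) v, L (c • v) = c * L v := by
    intro c v
    refine tendsto_nhds_unique (hL (c • v)) ?_
    have : (fun k => ⟪x k, c • v⟫_ℝ) = fun k => c * ⟪x k, v⟫_ℝ := by
      funext k; exact real_inner_smul_right _ _ _
    rw [this]; exact (hL v).const_mul c
  have hLbound : ∀ v, |L v| ≤ R * ‖v‖ := by
    intro v
    exact le_of_tendsto ((hL v).abs) (Filter.Eventually.of_forall (hbound v))
  set Lm : H →ₗ[ℝ] ℝ :=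
    { toFun := L, map_add' := hLadd, map_smul' := hLsmul } with hLm
  set Lc : H →L[ℝ] ℝ := Lm.mkContinuous R (fun v => by
    rw [Real.norm_eq_abs]; exact hLbound v) with hLc
  set p : H := (InnerProductSpace.toDual ℝ H).symm Lc with hp
  have hpv : ∀ v, ⟪p, v⟫_ℝ = L v := by
    intro v
    have := InnerProductSpace.toDual_symm_apply (𝕜 := ℝ) (E := H) (y := Lc) (x := v)
    rw [hp]; rw [this]; rfl
  have hweak : ∀ v, Tendsto (fun k => ⟪x k, v⟫_ℝ) (↑U) (𝓝 ⟪p, v⟫_ℝ) := by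
    intro v; rw [hpv v]; exact hL v
  -- p ∈ M
  have hpM : p ∈ M := by
    obtain ⟨q, hqM, hq⟩ := exists_norm_eq_iInf_of_complete_convex hM_ne
      (hM_closed.isComplete) hM_conv p
    have hproj := (norm_eq_iInf_iff_real_inner_le_zero hM_conv hqM).mp hq
    have hk : ∀ k, ⟪x k, p - q⟫_ℝ ≤ ⟪q, p - q⟫_ℝ := by
      intro k
      have h1 : ⟪p - q, x k - q⟫_ℝ ≤ 0 := hproj (x k) (hxM k)
      have h2 : ⟪p - q, x k - q⟫_ℝ = ⟪x k, p - q⟫_ℝ - ⟪q, p - q⟫_ℝ := by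
        rw [inner_sub_right, real_inner_comm (p - q) (x k), real_inner_comm (p - q) q]
      linarith [h2 ▸ h1]
    have h3 : ⟪p, p - q⟫_ℝ ≤ ⟪q, p - q⟫_ℝ :=
      le_of_tendsto (hweak (p - q)) (Filter.Eventually.of_forall hk)
    have h4 : ⟪p - q, p - q⟫_ℝ ≤ 0 := by
      rw [inner_sub_left]; linarith
    have h5 : p - q = 0 := by
      have := real_inner_self_nonpos.mp h4
      exact this
    have : p = q := by rwa [sub_eq_zero] at h5
    rwa [this]
  -- T p = p
  have hTp : T p = p := by
    set ε : ℕ → ℝ := fun k => ‖T (x k) - x k‖ with hε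
    have hεnn : ∀ k, 0 ≤ ε k := fun k => norm_nonneg _
    have hkey : ∀ k, ‖p - T p‖ ^ 2 ≤
        ε k ^ 2 + 2 * ε k * (R + ‖p‖) - 2 * ⟪x k - p, p - T p⟫_ℝ := by
      intro k
      have hid : ‖x k - T p‖ ^ 2 =
          ‖x k - p‖ ^ 2 + 2 * ⟪x k - p, p - T p⟫_ℝ + ‖p - T p‖ ^ 2 := by
        have : x k - T p = (x k - p) + (p - T p) := by abel
        rw [this, norm_add_sq_real]
      have hne : ‖x k - T p‖ ≤ ε k + ‖x k - p‖ := by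
        calc ‖x k - T p‖ ≤ ‖x k - T (x k)‖ + ‖T (x k) - T p‖ := norm_sub_le_norm_sub_add_norm_sub _ _ _
          _ ≤ ε k + ‖x k - p‖ := by
              gcongr
              · rw [norm_sub_rev]
              · exact hT_nonexp (x k) (hxM k) p hpM
      have hxp : ‖x k - p‖ ≤ R + ‖p‖ :=
        le_trans (norm_sub_le _ _) (by gcongr; exact hR k)
      nlinarith [norm_nonneg (x k - T p), norm_nonneg (x k - p), hεnn k]
    have hrhs : Tendsto (fun k => ε k ^ 2 + 2 * ε k * (R + ‖p‖)
        - 2 * ⟪x k - p, p - T p⟫_ℝ) (↑U) (𝓝 0) := by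
      have hεU : Tendsto ε (↑U) (𝓝 0) := hres.mono_left hU
      have h1 : Tendsto (fun k => ε k ^ 2 + 2 * ε k * (R + ‖p‖)) (↑U) (𝓝 0) := by
        have := ((hεU.pow 2).add ((hεU.const_mul 2).mul_const (R + ‖p‖)))
        simpa using this
      have h2 : Tendsto (fun k => ⟪x k - p, p - T p⟫_ℝ) (↑U) (𝓝 0) := by
        have h3 : Tendsto (fun k => ⟪x k, p - T p⟫_ℝ - ⟪p, p - T p⟫_ℝ) (↑U)
            (𝓝 (⟪p, p - T p⟫_ℝ - ⟪p, p - T p⟫_ℝ)) :=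
          (hweak (p - T p)).sub tendsto_const_nhds
        rw [sub_self] at h3
        have : (fun k => ⟪x k - p, p - T p⟫_ℝ)
            = fun k => ⟪x k, p - T p⟫_ℝ - ⟪p, p - T p⟫_ℝ := by
          funext k; rw [inner_sub_left]
        rw [this]; exact h3
      have := h1.sub ((h2.const_mul 2))
      simpa using this
    have hle : ‖p - T p‖ ^ 2 ≤ 0 :=
      ge_of_tendsto hrhs (Filter.Eventually.of_forall hkey)
    have : ‖p - T p‖ = 0 := by nlinarith [norm_nonneg (p - T p)]
    have : p - T p = 0 := norm_eq_zero.mp this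
    have : p = T p := by rwa [sub_eq_zero] at this
    exact this.symm
  exact ⟨p, hpM, hTp, hweak⟩

 set_option maxHeartbeats 1000000 in

lemma params_exist (α θ δ : ℝ) (hα0 : 0 ≤ α) (hα1 : α < 1) (hθ : 0 < θ) (hδ : 0 < δ)
    (hδbig : (α ^ 2 * (1 + α) + α * θ) / (1 - α ^ 2) < δ) :
    ∃ s β c : ℝ, 0 < s ∧ 0 ≤ β ∧ 0 < c ∧
      (∀ a1 : ℝ, 0 ≤ a1 → a1 ≤ α → a1 * (1 + a1) + s * a1 ^ 2 ≤ β) ∧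
      (∀ r : ℝ, 0 < r →
        r < (δ - α * (α * (1 + α) + α * δ + θ)) / (δ * (1 + α * (1 + α) + α * δ + θ)) →
        r < 1 ∧ β + c ≤ s * ((1 - r) / r) / (s + (1 - r) / r)) := by
  obtain ⟨A, hA⟩ : ∃ A : ℝ, A = α * (1 + α) + α * δ + θ := ⟨_, rfl⟩
  have hApos : 0 < A := by rw [hA]; positivity
  have h1α : (0:ℝ) < 1 - α ^ 2 := by nlinarith
  have hs0 : 0 < δ * (1 - α ^ 2) - α ^ 2 * (1 + α) - α * θ := by
    rw [div_lt_iff₀ h1α] at hδbig; nlinarith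
  have hδA : α * A < δ := by rw [hA]; nlinarith
  obtain ⟨ρm, hρm⟩ : ∃ ρm : ℝ, ρm = (δ - α * A) / (δ * (1 + A)) := ⟨_, rfl⟩
  have hconv : (δ - α * (α * (1 + α) + α * δ + θ)) / (δ * (1 + α * (1 + α) + α * δ + θ))
      = ρm := by rw [hρm, hA]; congr 1; ring
  have hDne : δ * (1 + A) ≠ 0 := by positivity
  have hNpos : (0:ℝ) < δ - α * A := by linarith
  have hρmpos : 0 < ρm := by
    rw [hρm]; exact div_pos hNpos (by positivity)
  have hρm1 : ρm < 1 := by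
    rw [hρm, div_lt_one (by positivity)]; nlinarith
  obtain ⟨σ, hσ⟩ : ∃ σ : ℝ, σ = (1 - ρm) / ρm := ⟨_, rfl⟩
  have hσpos : 0 < σ := hσ ▸ div_pos (by linarith) hρmpos
  have hNne : δ - α * A ≠ 0 := hNpos.ne'
  have hσeq : σ = A * (δ + α) / (δ - α * A) := by
    rw [hσ, hρm]
    field_simp
    ring
  -- key inequality: α(1+α) < σ(1-α)²
  have hkey : α * (1 + α) < σ * (1 - α) ^ 2 := by
    have hpoly : α * (1 + α) * (δ - α * A) < A * (δ + α) * (1 - α) ^ 2 := by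
      obtain ⟨s0, hs0def⟩ : ∃ s0 : ℝ, s0 = δ * (1 - α ^ 2) - α ^ 2 * (1 + α) - α * θ :=
        ⟨_, rfl⟩
      have hs0pos : 0 < s0 := hs0def ▸ hs0
      have hQ : 0 < s0 ^ 2 - α * (1 + α) ^ 2 * s0 + α * (1 + α) ^ 2 := by
        rcases eq_or_lt_of_le hα0 with h | h
        · rw [← h]; simpa using (pow_pos hs0pos 2)
        · have hc : 0 < α * (1 + α) ^ 2 := mul_pos h (pow_pos (by linarith) 2)
          have hc4 : α * (1 + α) ^ 2 < 4 := by nlinarith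
          nlinarith [sq_nonneg (2 * s0 - α * (1 + α) ^ 2), mul_pos hc (by linarith : (0:ℝ) < 4 - α * (1 + α) ^ 2)]
      have hident : (A * (δ + α) * (1 - α) ^ 2 - α * (1 + α) * (δ - α * A)) * (1 - α ^ 2) ^ 2
          = α * ((1 - α) ^ 2 * (s0 ^ 2 - α * (1 + α) ^ 2 * s0 + α * (1 + α) ^ 2))
            + θ * s0 * ((1 - α) ^ 2 * (1 + α ^ 2)) + α * (θ * (1 - α ^ 2) ^ 2)
            + α * (θ ^ 2 * (1 - α) ^ 2) := by
        rw [hA, hs0def]; ring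
      have hRHSpos : 0 < α * ((1 - α) ^ 2 * (s0 ^ 2 - α * (1 + α) ^ 2 * s0 + α * (1 + α) ^ 2))
            + θ * s0 * ((1 - α) ^ 2 * (1 + α ^ 2)) + α * (θ * (1 - α ^ 2) ^ 2)
            + α * (θ ^ 2 * (1 - α) ^ 2) := by
        have t1 : 0 ≤ α * ((1 - α) ^ 2 * (s0 ^ 2 - α * (1 + α) ^ 2 * s0 + α * (1 + α) ^ 2)) :=
          mul_nonneg hα0 (mul_nonneg (sq_nonneg _) hQ.le)
        have t2 : 0 < θ * s0 * ((1 - α) ^ 2 * (1 + α ^ 2)) :=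
          mul_pos (mul_pos hθ hs0pos)
            (mul_pos (by nlinarith : (0:ℝ) < (1 - α) ^ 2) (by positivity))
        have t3 : 0 ≤ α * (θ * (1 - α ^ 2) ^ 2) := mul_nonneg hα0 (by positivity)
        have t4 : 0 ≤ α * (θ ^ 2 * (1 - α) ^ 2) := mul_nonneg hα0 (by positivity)
        linarith
      have hprod : 0 < (A * (δ + α) * (1 - α) ^ 2 - α * (1 + α) * (δ - α * A))
          * (1 - α ^ 2) ^ 2 := hident ▸ hRHSpos
      rcases mul_pos_iff.mp hprod with ⟨h1, _⟩ | ⟨_, h2⟩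
      · linarith
      · exact absurd h2 (not_lt.mpr (sq_nonneg _))
    rw [hσeq, div_mul_eq_mul_div, lt_div_iff₀ hNpos]
    linarith
  -- monotonicity helper
  have hmono : ∀ s : ℝ, 0 < s → ∀ t : ℝ, σ ≤ t → s * σ / (s + σ) ≤ s * t / (s + t) := by
    intro s hs t ht
    have h1 : 0 < s + σ := by linarith
    have h2 : 0 < s + t := by linarith
    rw [div_le_div_iff₀ h1 h2]
    nlinarith [mul_le_mul_of_nonneg_left ht (mul_nonneg hs.le hs.le)]
  have hrσ : ∀ r : ℝ, 0 < r → r < ρm → σ ≤ (1 - r) / r := by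
    intro r hr hrm
    rw [hσ, div_le_div_iff₀ hρmpos hr]
    nlinarith
  rcases eq_or_lt_of_le hα0 with hα | hα
  · -- α = 0
    refine ⟨1, 0, σ / (1 + σ), one_pos, le_refl 0, by positivity, ?_, ?_⟩
    · intro a1 h0 h1
      have ha1 : a1 = 0 := le_antisymm (hα ▸ h1) h0
      simp [ha1]
    · intro r hr hrm
      rw [hconv] at hrm
      refine ⟨hrm.trans hρm1, ?_⟩
      have h3 := hmono 1 one_pos _ (hrσ r hr hrm)
      calc (0:ℝ) + σ / (1 + σ) = 1 * σ / (1 + σ) := by ring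
        _ ≤ 1 * ((1 - r) / r) / (1 + (1 - r) / r) := h3
  · -- α > 0
    have hαne : α ≠ 0 := ne_of_gt hα
    obtain ⟨s, hsdef⟩ : ∃ s : ℝ, s = σ * (1 - α) / α := ⟨_, rfl⟩
    have hs : 0 < s := hsdef ▸ div_pos (mul_pos hσpos (by linarith)) hα
    have hsa2 : s * α ^ 2 = σ * (1 - α) * α := by
      rw [hsdef]; field_simp
    have hsum : s + σ = σ / α := by
      rw [hsdef]; field_simp; ring
    have heq : s * σ / (s + σ) = σ * (1 - α) := by
      rw [hsum, hsdef]
      rw [div_eq_iff (by positivity : σ / α ≠ 0)]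
      field_simp
    refine ⟨s, α * (1 + α) + s * α ^ 2, σ * (1 - α) ^ 2 - α * (1 + α), hs,
      add_nonneg (by positivity) (mul_nonneg hs.le (sq_nonneg _)),
      by nlinarith, ?_, ?_⟩
    · intro a1 h0 h1
      have hsa : s * a1 ^ 2 ≤ s * α ^ 2 :=
        mul_le_mul_of_nonneg_left (by nlinarith) hs.le
      nlinarith
    · intro r hr hrm
      rw [hconv] at hrm
      refine ⟨hrm.trans hρm1, ?_⟩
      have h3 := hmono s hs _ (hrσ r hr hrm)
      rw [heq] at h3
      have hbc : α * (1 + α) + s * α ^ 2 + (σ * (1 - α) ^ 2 - α * (1 + α))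
          = σ * (1 - α) := by linear_combination hsa2
      linarith

section AuxMain
variable {H : Type*} [NormedAddCommGroup H] [InnerProductSpace ℝ H]

lemma quad_bound (A B : H) (a s σ β c : ℝ) (hs : 0 < s) (hσ : 0 < σ)
    (ha : 0 ≤ a) (hfc : β + c ≤ s * σ / (s + σ)) :
    (β + c) * ‖A‖ ^ 2 - s * a ^ 2 * ‖B‖ ^ 2 ≤ σ * ‖A - a • B‖ ^ 2 := by
  have hssσ : 0 < s + σ := by linarith
  have hexp : ‖A - a • B‖ ^ 2 = ‖A‖ ^ 2 - 2 * (a * ⟪A, B⟫_ℝ) + a ^ 2 * ‖B‖ ^ 2 := by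
    rw [norm_sub_sq_real, real_inner_smul_right, norm_smul, Real.norm_eq_abs,
      mul_pow, sq_abs]
  have hfc' : (β + c) * (s + σ) ≤ s * σ := by
    rw [le_div_iff₀ hssσ] at hfc; exact hfc
  have hip : ⟪A, B⟫_ℝ ≤ ‖A‖ * ‖B‖ := real_inner_le_norm A B
  rw [← mul_le_mul_iff_left₀ hssσ, hexp]
  have hip2 : 2 * σ * (s + σ) * a * ⟪A, B⟫_ℝ ≤ 2 * σ * (s + σ) * a * (‖A‖ * ‖B‖) :=
    mul_le_mul_of_nonneg_left hip
      (by have := mul_pos hσ hssσ; nlinarith)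
  nlinarith [hip2, sq_nonneg (σ * ‖A‖ - (s + σ) * (a * ‖B‖)),
    mul_le_mul_of_nonneg_right hfc' (sq_nonneg ‖A‖)]

end AuxMain

set_option maxHeartbeats 1600000 in
theorem inertial_krasnoselskii_mann_convergence
    {H : Type*} [NormedAddCommGroup H] [InnerProductSpace ℝ H] [CompleteSpace H]
    (M : Set H) (hM_ne : M.Nonempty) (hM_closed : IsClosed M)
    (hM_affine : ∀ x ∈ M, ∀ y ∈ M, ∀ t : ℝ, t • x + (1 - t) • y ∈ M)
    (T : H → H) (hT_maps : ∀ x ∈ M, T x ∈ M)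
    (hT_nonexp : ∀ x ∈ M, ∀ y ∈ M, ‖T x - T y‖ ≤ ‖x - y‖)
    (hfix : ∃ z ∈ M, T z = z)
    (αs ρs : ℕ → ℝ) (hparams : InertialCond αs ρs)
    (x : ℕ → H) (hx0 : x 0 ∈ M) (hx1 : x 1 ∈ M)
    (hiter : ∀ k, 1 ≤ k →
      x (k + 1) = x k + αs k • (x k - x (k - 1)) +
        ρs k • (T (x k + αs k • (x k - x (k - 1))) - (x k + αs k • (x k - x (k - 1))))) :
    (Summable fun k => ‖x (k + 1) - x k‖ ^ 2) ∧
    ∃ p ∈ M, T p = p ∧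
      ∀ v : H, Tendsto (fun k => ⟪x k, v⟫_ℝ) atTop (𝓝 ⟪p, v⟫_ℝ) := by
  obtain ⟨α, ρ, θ, δ, hmαs, hαs1, hαsk, hα0, hα1, hρpos, hθ, hδ, hδbig, hρk⟩ := hparams
  obtain ⟨z₀, hz₀M, hz₀fix⟩ := hfix
  obtain ⟨s, β, c, hs, hβ0, hc, hβcond, hrcond⟩ := params_exist α θ δ hα0 hα1 hθ hδ hδbig
  have hM_conv : Convex ℝ M := by
    intro u hu v hv a b ha hb hab
    have := hM_affine u hu v hv a
    rwa [show (1:ℝ) - a = b by linarith] at this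
  have haff : ∀ u ∈ M, ∀ w ∈ M, ∀ t : ℝ, u + t • (w - u) ∈ M := by
    intro u hu w hw t
    have h1 := hM_affine w hw u hu t
    have h2 : t • w + (1 - t) • u = u + t • (w - u) := by
      rw [smul_sub, sub_smul, one_smul]; abel
    rwa [h2] at h1
  -- basic per-k facts
  have hrfacts : ∀ k : ℕ, 1 ≤ k → 0 < ρs k ∧ ρs k < 1 ∧
      β + c ≤ s * ((1 - ρs k) / ρs k) / (s + (1 - ρs k) / ρs k) := by
    intro k hk
    have h1 := (hρk k hk).1
    have h2 := (hρk k hk).2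
    have hr0 : 0 < ρs k := lt_of_lt_of_le hρpos h1
    obtain ⟨hr1, hf⟩ := hrcond (ρs k) hr0 h2
    exact ⟨hr0, hr1, hf⟩
  -- membership
  have hxM : ∀ k, x k ∈ M := by
    have hpair : ∀ k, x k ∈ M ∧ x (k + 1) ∈ M := by
      intro k
      induction k with
      | zero => exact ⟨hx0, hx1⟩
      | succ n ih =>
        refine ⟨ih.2, ?_⟩
        have hY : x (n + 1) + αs (n + 1) • (x (n + 1) - x n) ∈ M := by
          have := haff (x (n + 1)) ih.2 (x (n + 1)) ih.2 0
          have h2 := haff (x n) ih.1 (x (n + 1)) ih.2 (1 + αs (n + 1))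
          have h3 : x n + (1 + αs (n + 1)) • (x (n + 1) - x n)
              = x (n + 1) + αs (n + 1) • (x (n + 1) - x n) := by
            rw [add_smul, one_smul]; abel
          rwa [h3] at h2
        have h4 := haff _ hY _ (hT_maps _ hY) (ρs (n + 1))
        have h5 := hiter (n + 1) (Nat.le_add_left 1 n)
        simp only [Nat.add_sub_cancel] at h5
        rw [h5]; exact h4
    exact fun k => (hpair k).1
  -- D j = x (j+1) - x j
  obtain ⟨D, hD⟩ : ∃ D : ℕ → H, D = fun j => x (j + 1) - x j := ⟨_, rfl⟩
  have hDj : ∀ i, D i = x (i + 1) - x i := fun i => by simp only [hD]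
  -- the key inequality
  have key : ∀ z ∈ M, T z = z → ∀ j : ℕ,
      ‖x (j + 2) - z‖ ^ 2 ≤ ‖x (j + 1) - z‖ ^ 2
        + αs (j + 1) * (‖x (j + 1) - z‖ ^ 2 - ‖x j - z‖ ^ 2)
        + β * ‖D j‖ ^ 2 - (β + c) * ‖D (j + 1)‖ ^ 2 := by
    intro z hzM hzfix j
    have hk1 : 1 ≤ j + 1 := Nat.le_add_left 1 j
    obtain ⟨ha0, haα⟩ := hαsk (j + 1) hk1
    obtain ⟨hr0, hr1, hf⟩ := hrfacts (j + 1) hk1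
    obtain ⟨a, ha⟩ : ∃ a : ℝ, a = αs (j + 1) := ⟨_, rfl⟩
    obtain ⟨r, hr⟩ : ∃ r : ℝ, r = ρs (j + 1) := ⟨_, rfl⟩
    rw [← ha] at ha0 haα ⊢
    rw [← hr] at hr0 hr1 hf
    obtain ⟨Y, hY⟩ : ∃ Y : H, Y = x (j + 1) + a • D j := ⟨_, rfl⟩
    obtain ⟨E, hE⟩ : ∃ E : H, E = T Y - Y := ⟨_, rfl⟩
    have hYM : Y ∈ M := by
      rw [hY, hD]
      have h2 := haff (x j) (hxM j) (x (j + 1)) (hxM (j + 1)) (1 + a)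
      have h3 : x j + (1 + a) • (x (j + 1) - x j)
          = x (j + 1) + a • (x (j + 1) - x j) := by
        rw [add_smul, one_smul]; abel
      rwa [h3] at h2
    have hstep : x (j + 2) = Y + r • E := by
      have h5 := hiter (j + 1) hk1
      simp only [Nat.add_sub_cancel] at h5
      rw [hE, hY, hDj j, ha, hr]
      exact h5
    have hDj1 : D (j + 1) = a • D j + r • E := by
      rw [hDj (j + 1), hstep, hY]
      abel
    -- (1) nonexpansiveness
    have hTY : ‖T Y - z‖ ≤ ‖Y - z‖ := by
      conv_lhs => rw [← hzfix]
      exact hT_nonexp Y hYM z hzM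
    -- (2)
    have h2e : 2 * ⟪Y - z, E⟫_ℝ ≤ -‖E‖ ^ 2 := by
      have hYE : Y - z + E = T Y - z := by rw [hE]; abel
      have h6 : ‖Y - z + E‖ ^ 2 ≤ ‖Y - z‖ ^ 2 := by
        rw [hYE]
        have := norm_nonneg (T Y - z)
        nlinarith [hTY]
      rw [norm_add_sq_real] at h6
      linarith
    -- (3)
    have hx2 : ‖x (j + 2) - z‖ ^ 2
        = ‖Y - z‖ ^ 2 + 2 * (r * ⟪Y - z, E⟫_ℝ) + r ^ 2 * ‖E‖ ^ 2 := by
      have h7 : x (j + 2) - z = (Y - z) + r • E := by rw [hstep]; abel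
      rw [h7, norm_add_sq_real, real_inner_smul_right, norm_smul, Real.norm_eq_abs,
        mul_pow, sq_abs]
    -- (4)
    have h4 : ‖x (j + 2) - z‖ ^ 2 ≤ ‖Y - z‖ ^ 2 - r * (1 - r) * ‖E‖ ^ 2 := by
      have h8 := mul_le_mul_of_nonneg_left h2e hr0.le
      nlinarith [hx2]
    -- (5)
    have hY2 : ‖Y - z‖ ^ 2 = ‖x (j + 1) - z‖ ^ 2
        + a * (‖x (j + 1) - z‖ ^ 2 - ‖x j - z‖ ^ 2) + a * (1 + a) * ‖D j‖ ^ 2 := by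
      have h9 : Y - z = (x (j + 1) - z) + a • D j := by rw [hY]; abel
      have h10 : x j - z = (x (j + 1) - z) - D j := by rw [hDj j]; abel
      have h11 : ‖x j - z‖ ^ 2
          = ‖x (j + 1) - z‖ ^ 2 - 2 * ⟪x (j + 1) - z, D j⟫_ℝ + ‖D j‖ ^ 2 := by
        rw [h10, norm_sub_sq_real]
      rw [h9, norm_add_sq_real, real_inner_smul_right, norm_smul, Real.norm_eq_abs,
        mul_pow, sq_abs]
      linear_combination a * h11
    -- (6)
    have hE2 : r * (1 - r) * ‖E‖ ^ 2 = ((1 - r) / r) * ‖D (j + 1) - a • D j‖ ^ 2 := by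
      have h12 : D (j + 1) - a • D j = r • E := by rw [hDj1]; abel
      rw [h12, norm_smul, Real.norm_eq_abs, mul_pow, sq_abs]
      field_simp
    -- (7)
    have h7q : (β + c) * ‖D (j + 1)‖ ^ 2 - s * a ^ 2 * ‖D j‖ ^ 2
        ≤ ((1 - r) / r) * ‖D (j + 1) - a • D j‖ ^ 2 := by
      have hσr : 0 < (1 - r) / r := div_pos (by linarith) hr0
      exact quad_bound (D (j + 1)) (D j) a s ((1 - r) / r) β c hs hσr ha0 hf
    -- (8) combine
    have hβa : a * (1 + a) + s * a ^ 2 ≤ β := hβcond a ha0 haα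
    have hβa2 : (a * (1 + a) + s * a ^ 2) * ‖D j‖ ^ 2 ≤ β * ‖D j‖ ^ 2 :=
      mul_le_mul_of_nonneg_right hβa (sq_nonneg _)
    linarith [h4, hY2, hE2, h7q, hβa2]
  -- Lyapunov sequence for z₀
  obtain ⟨φ, hφ⟩ : ∃ φ : ℕ → ℝ, φ = fun k => ‖x k - z₀‖ ^ 2 := ⟨_, rfl⟩
  have hφk : ∀ k, φ k = ‖x k - z₀‖ ^ 2 := fun k => by simp only [hφ]
  have hφ0 : ∀ k, 0 ≤ φ k := fun k => (hφk k) ▸ sq_nonneg _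
  obtain ⟨μ, hμ⟩ : ∃ μ : ℕ → ℝ,
      μ = fun j => φ (j + 1) - αs (j + 1) * φ j + β * ‖D j‖ ^ 2 := ⟨_, rfl⟩
  have hμj : ∀ j, μ j = φ (j + 1) - αs (j + 1) * φ j + β * ‖D j‖ ^ 2 :=
    fun j => by simp only [hμ]
  have hkey0 : ∀ j, φ (j + 2) ≤ φ (j + 1) + αs (j + 1) * (φ (j + 1) - φ j)
      + β * ‖D j‖ ^ 2 - (β + c) * ‖D (j + 1)‖ ^ 2 := fun j => by
    rw [hφk, hφk, hφk]; exact key z₀ hz₀M hz₀fix j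
  have hμrec : ∀ j, μ (j + 1) ≤ μ j - c * ‖D (j + 1)‖ ^ 2 := by
    intro j
    have h1 := hkey0 j
    have h2 : αs (j + 1) * φ (j + 1) ≤ αs (j + 2) * φ (j + 1) :=
      mul_le_mul_of_nonneg_right (hmαs (by omega)) (hφ0 _)
    rw [hμj (j + 1), hμj j]
    linarith
  have hμ0 : ∀ j, μ j ≤ μ 0 := by
    intro j
    induction j with
    | zero => exact le_refl _
    | succ n ih =>
      have h1 := hμrec n
      have h2 : 0 ≤ c * ‖D (n + 1)‖ ^ 2 := mul_nonneg hc.le (sq_nonneg _)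
      linarith
  obtain ⟨B, hBdef⟩ : ∃ B : ℝ, B = φ 0 + φ 1 + max (μ 0) 0 / (1 - α) := ⟨_, rfl⟩
  have h1α : (0:ℝ) < 1 - α := by linarith
  have hmax0 : 0 ≤ max (μ 0) 0 := le_max_right _ _
  have hφstep : ∀ n, φ (n + 1) ≤ α * φ n + max (μ 0) 0 := by
    intro n
    have h1 := hμ0 n
    rw [hμj n] at h1
    have h2 : αs (n + 1) * φ n ≤ α * φ n :=
      mul_le_mul_of_nonneg_right (hαsk (n + 1) (Nat.le_add_left 1 n)).2 (hφ0 n)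
    have h3 : 0 ≤ β * ‖D n‖ ^ 2 := mul_nonneg hβ0 (sq_nonneg _)
    have h4 : μ 0 ≤ max (μ 0) 0 := le_max_left _ _
    linarith
  have hφB : ∀ k, φ k ≤ B := by
    have hBineq : max (μ 0) 0 ≤ (1 - α) * B := by
      have : (1 - α) * (max (μ 0) 0 / (1 - α)) = max (μ 0) 0 :=
        mul_div_cancel₀ _ h1α.ne'
      have h5 : 0 ≤ (1 - α) * (φ 0 + φ 1) :=
        mul_nonneg h1α.le (add_nonneg (hφ0 0) (hφ0 1))
      nlinarith [hBdef]
    intro k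
    induction k with
    | zero =>
      rw [hBdef]
      have := div_nonneg hmax0 h1α.le
      linarith [hφ0 1]
    | succ n ih =>
      have h1 := hφstep n
      have h2 : α * φ n ≤ α * B := mul_le_mul_of_nonneg_left ih hα0
      linarith
  have hB0 : 0 ≤ B := le_trans (hφ0 0) (hφB 0)
  have hμlb : ∀ j, -(α * B) ≤ μ j := by
    intro j
    rw [hμj j]
    have h1 : αs (j + 1) * φ j ≤ α * B :=
      mul_le_mul (hαsk (j + 1) (Nat.le_add_left 1 j)).2 (hφB j) (hφ0 j) hα0
    have h2 : 0 ≤ β * ‖D j‖ ^ 2 := mul_nonneg hβ0 (sq_nonneg _)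
    linarith [hφ0 (j + 1)]
  have htele : ∀ n, c * ∑ j ∈ Finset.range n, ‖D (j + 1)‖ ^ 2 ≤ μ 0 - μ n := by
    intro n
    induction n with
    | zero => simp
    | succ m ih =>
      rw [Finset.sum_range_succ]
      have := hμrec m
      linarith
  have hsumbound : ∀ n, ∑ j ∈ Finset.range n, ‖D (j + 1)‖ ^ 2 ≤ (μ 0 + α * B) / c := by
    intro n
    rw [le_div_iff₀ hc]
    have := htele n
    have := hμlb n
    linarith [mul_comm c (∑ j ∈ Finset.range n, ‖D (j + 1)‖ ^ 2)]
  have hrhs0 : 0 ≤ (μ 0 + α * B) / c := le_trans (Finset.sum_nonneg (fun i _ => sq_nonneg _)) (hsumbound 1)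
  have hDsum : Summable (fun k => ‖D k‖ ^ 2) := by
    apply summable_of_sum_range_le (c := ‖D 0‖ ^ 2 + (μ 0 + α * B) / c)
      (fun n => sq_nonneg _)
    intro n
    cases n with
    | zero =>
      simp only [Finset.range_zero, Finset.sum_empty]
      have := sq_nonneg ‖D 0‖
      linarith [hrhs0]
    | succ m =>
      rw [Finset.sum_range_succ' (fun k => ‖D k‖ ^ 2) m]
      linarith [hsumbound m]
  have goal1 : Summable fun k => ‖x (k + 1) - x k‖ ^ 2 := by
    have heq : (fun k => ‖x (k + 1) - x k‖ ^ 2) = fun k => ‖D k‖ ^ 2 := by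
      funext k; rw [hDj k]
    rw [heq]; exact hDsum
  -- D → 0
  have hDnorm0 : Tendsto (fun k => ‖D k‖) atTop (𝓝 0) := by
    have h1 : Tendsto (fun k => ‖D k‖ ^ 2) atTop (𝓝 0) := hDsum.tendsto_atTop_zero
    have h2 : Tendsto (fun k => Real.sqrt (‖D k‖ ^ 2)) atTop (𝓝 (Real.sqrt 0)) :=
      (Real.continuous_sqrt.tendsto 0).comp h1
    have h3 : (fun k => Real.sqrt (‖D k‖ ^ 2)) = fun k => ‖D k‖ := by
      funext k; exact Real.sqrt_sq (norm_nonneg _)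
    rw [h3, Real.sqrt_zero] at h2
    exact h2
  have hDnorm0' : Tendsto (fun k => ‖D (k + 1)‖) atTop (𝓝 0) := by
    have := hDnorm0.comp (tendsto_add_atTop_nat 1)
    exact this
  -- residual to zero
  have hresj : ∀ j, ‖T (x (j + 1)) - x (j + 1)‖
      ≤ 2 * α * ‖D j‖ + (‖D (j + 1)‖ + α * ‖D j‖) / ρ := by
    intro j
    have hk1 : 1 ≤ j + 1 := Nat.le_add_left 1 j
    obtain ⟨ha0, haα⟩ := hαsk (j + 1) hk1
    obtain ⟨hr0, hr1, _⟩ := hrfacts (j + 1) hk1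
    obtain ⟨a, ha⟩ : ∃ a : ℝ, a = αs (j + 1) := ⟨_, rfl⟩
    obtain ⟨r, hr⟩ : ∃ r : ℝ, r = ρs (j + 1) := ⟨_, rfl⟩
    rw [← ha] at ha0 haα
    rw [← hr] at hr0 hr1
    have hρr : ρ ≤ r := hr ▸ (hρk (j + 1) hk1).1
    obtain ⟨Y, hY⟩ : ∃ Y : H, Y = x (j + 1) + a • D j := ⟨_, rfl⟩
    obtain ⟨E, hE⟩ : ∃ E : H, E = T Y - Y := ⟨_, rfl⟩
    have hYM : Y ∈ M := by
      rw [hY, hDj j]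
      have h2 := haff (x j) (hxM j) (x (j + 1)) (hxM (j + 1)) (1 + a)
      have h3 : x j + (1 + a) • (x (j + 1) - x j)
          = x (j + 1) + a • (x (j + 1) - x j) := by
        rw [add_smul, one_smul]; abel
      rwa [h3] at h2
    have hstep : x (j + 2) = Y + r • E := by
      have h5 := hiter (j + 1) hk1
      simp only [Nat.add_sub_cancel] at h5
      rw [hE, hY, hDj j, ha, hr]
      exact h5
    have hDj1 : D (j + 1) - a • D j = r • E := by
      rw [hDj (j + 1), hstep, hY]
      abel
    have hEnorm : ρ * ‖E‖ ≤ ‖D (j + 1)‖ + α * ‖D j‖ := by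
      have h6 : ‖D (j + 1) - a • D j‖ = r * ‖E‖ := by
        rw [hDj1, norm_smul, Real.norm_eq_abs, abs_of_pos hr0]
      have h7 : ‖D (j + 1) - a • D j‖ ≤ ‖D (j + 1)‖ + α * ‖D j‖ := by
        calc ‖D (j + 1) - a • D j‖ ≤ ‖D (j + 1)‖ + ‖a • D j‖ := norm_sub_le _ _
          _ ≤ ‖D (j + 1)‖ + α * ‖D j‖ := by
              rw [norm_smul, Real.norm_eq_abs, abs_of_nonneg ha0]
              gcongr
      have h8 : ρ * ‖E‖ ≤ r * ‖E‖ := mul_le_mul_of_nonneg_right hρr (norm_nonneg _)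
      linarith [h6 ▸ h7]
    have hEdiv : ‖E‖ ≤ (‖D (j + 1)‖ + α * ‖D j‖) / ρ := by
      rw [le_div_iff₀ hρpos]
      linarith [hEnorm]
    have htri : ‖T (x (j + 1)) - x (j + 1)‖
        ≤ ‖T (x (j + 1)) - T Y‖ + ‖T Y - Y‖ + ‖Y - x (j + 1)‖ := by
      calc ‖T (x (j + 1)) - x (j + 1)‖
          ≤ ‖T (x (j + 1)) - T Y‖ + ‖T Y - x (j + 1)‖ :=
            norm_sub_le_norm_sub_add_norm_sub _ _ _
        _ ≤ ‖T (x (j + 1)) - T Y‖ + (‖T Y - Y‖ + ‖Y - x (j + 1)‖) := by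
            gcongr
            exact norm_sub_le_norm_sub_add_norm_sub _ _ _
        _ = _ := by ring
    have hxY : ‖Y - x (j + 1)‖ ≤ α * ‖D j‖ := by
      rw [hY]
      have : x (j + 1) + a • D j - x (j + 1) = a • D j := by abel
      rw [this, norm_smul, Real.norm_eq_abs, abs_of_nonneg ha0]
      gcongr
    have hTxY : ‖T (x (j + 1)) - T Y‖ ≤ α * ‖D j‖ := by
      have h9 := hT_nonexp (x (j + 1)) (hxM (j + 1)) Y hYM
      have h10 : ‖x (j + 1) - Y‖ = ‖Y - x (j + 1)‖ := norm_sub_rev _ _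
      linarith [hxY]
    have hTYE : ‖T Y - Y‖ = ‖E‖ := by rw [hE]
    linarith [hEdiv]
  have hres : Tendsto (fun k => ‖T (x k) - x k‖) atTop (𝓝 0) := by
    rw [← tendsto_add_atTop_iff_nat 1]
    apply squeeze_zero (fun k => norm_nonneg _) hresj
    have h11 : Tendsto (fun j => 2 * α * ‖D j‖ + (‖D (j + 1)‖ + α * ‖D j‖) / ρ) atTop
        (𝓝 (2 * α * 0 + (0 + α * 0) / ρ)) :=
      ((hDnorm0.const_mul (2 * α)).add
        ((hDnorm0'.add (hDnorm0.const_mul α)).div_const ρ))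
    simpa using h11
  -- uniform bound on the iterates
  have hxbound : ∀ k, ‖x k‖ ≤ Real.sqrt B + ‖z₀‖ := by
    intro k
    have h1 : ‖x k - z₀‖ ^ 2 ≤ B := (hφk k) ▸ hφB k
    have h2 : ‖x k - z₀‖ ≤ Real.sqrt B := by
      nlinarith [Real.sq_sqrt hB0, Real.sqrt_nonneg B, norm_nonneg (x k - z₀)]
    calc ‖x k‖ = ‖(x k - z₀) + z₀‖ := by rw [sub_add_cancel]
      _ ≤ ‖x k - z₀‖ + ‖z₀‖ := norm_add_le _ _
      _ ≤ Real.sqrt B + ‖z₀‖ := by linarith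
  -- each fixed point gives a convergent distance sequence
  have hφlim : ∀ z ∈ M, T z = z → ∃ l, Tendsto (fun k => ‖x k - z‖ ^ 2) atTop (𝓝 l) := by
    intro z hzM hzfix
    apply phi_converges (fun k => ‖x k - z‖ ^ 2) (fun k => β * ‖D (k - 1)‖ ^ 2) α hα0 hα1
      (fun k => sq_nonneg _) (fun k => mul_nonneg hβ0 (sq_nonneg _))
    · rw [← summable_nat_add_iff 1]
      have heq2 : (fun k => β * ‖D (k + 1 - 1)‖ ^ 2) = fun k => β * ‖D k‖ ^ 2 := by
        funext k; simp
      rw [heq2]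
      exact hDsum.mul_left β
    · intro k hk
      obtain ⟨j, rfl⟩ : ∃ j, k = j + 1 := ⟨k - 1, by omega⟩
      simp only [Nat.add_sub_cancel]
      have h1 := key z hzM hzfix j
      have h2 : αs (j + 1) * (‖x (j + 1) - z‖ ^ 2 - ‖x j - z‖ ^ 2)
          ≤ α * max (‖x (j + 1) - z‖ ^ 2 - ‖x j - z‖ ^ 2) 0 := by
        rcases le_or_gt (‖x (j + 1) - z‖ ^ 2 - ‖x j - z‖ ^ 2) 0 with h | h
        · have h3 : αs (j + 1) * (‖x (j + 1) - z‖ ^ 2 - ‖x j - z‖ ^ 2) ≤ 0 :=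
            mul_nonpos_of_nonneg_of_nonpos (hαsk (j + 1) (Nat.le_add_left 1 j)).1 h
          have h4 : 0 ≤ α * max (‖x (j + 1) - z‖ ^ 2 - ‖x j - z‖ ^ 2) 0 :=
            mul_nonneg hα0 (le_max_right _ _)
          linarith
        · rw [max_eq_left h.le]
          exact mul_le_mul_of_nonneg_right (hαsk (j + 1) (Nat.le_add_left 1 j)).2 h.le
      have h5 : 0 ≤ (β + c) * ‖D (j + 1)‖ ^ 2 :=
        mul_nonneg (by linarith) (sq_nonneg _)
      linarith
  -- weak convergence via ultrafilters
  have hU₀le : ↑(Ultrafilter.of (atTop : Filter ℕ)) ≤ (atTop : Filter ℕ) :=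
    Ultrafilter.of_le _
  obtain ⟨p, hpM, hpfix, hpweak⟩ := weak_cluster M hM_ne hM_closed hM_conv T hT_maps
    hT_nonexp x hxM _ hxbound hres (Ultrafilter.of atTop) hU₀le
  refine ⟨goal1, p, hpM, hpfix, ?_⟩
  intro v
  rw [tendsto_iff_ultrafilter]
  intro U hU
  obtain ⟨q, hqM, hqfix, hqweak⟩ := weak_cluster M hM_ne hM_closed hM_conv T hT_maps
    hT_nonexp x hxM _ hxbound hres U hU
  obtain ⟨lp, hlp⟩ := hφlim p hpM hpfix
  obtain ⟨lq, hlq⟩ := hφlim q hqM hqfix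
  have hiden : (fun k => ‖x k - q‖ ^ 2)
      = fun k => ‖x k - p‖ ^ 2 + 2 * ⟪x k - p, p - q⟫_ℝ + ‖p - q‖ ^ 2 := by
    funext k
    have h1 : x k - q = (x k - p) + (p - q) := by abel
    rw [h1, norm_add_sq_real]
  have hinsplit : (fun k => ⟪x k - p, p - q⟫_ℝ)
      = fun k => ⟪x k, p - q⟫_ℝ - ⟪p, p - q⟫_ℝ := by
    funext k; rw [inner_sub_left]
  -- along U
  have hinnerU : Tendsto (fun k => ⟪x k - p, p - q⟫_ℝ) (↑U)
      (𝓝 (⟪q, p - q⟫_ℝ - ⟪p, p - q⟫_ℝ)) := by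
    rw [hinsplit]
    exact (hqweak (p - q)).sub tendsto_const_nhds
  have e1 : lq = lp + 2 * (⟪q, p - q⟫_ℝ - ⟪p, p - q⟫_ℝ) + ‖p - q‖ ^ 2 := by
    refine tendsto_nhds_unique (hlq.mono_left hU) ?_
    rw [hiden]
    exact ((hlp.mono_left hU).add (hinnerU.const_mul 2)).add tendsto_const_nhds
  -- along U₀
  have hinnerU0 : Tendsto (fun k => ⟪x k - p, p - q⟫_ℝ) (↑(Ultrafilter.of (atTop : Filter ℕ)))
      (𝓝 (⟪p, p - q⟫_ℝ - ⟪p, p - q⟫_ℝ)) := by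
    rw [hinsplit]
    exact (hpweak (p - q)).sub tendsto_const_nhds
  have e2 : lq = lp + 2 * (⟪p, p - q⟫_ℝ - ⟪p, p - q⟫_ℝ) + ‖p - q‖ ^ 2 := by
    refine tendsto_nhds_unique (hlq.mono_left hU₀le) ?_
    rw [hiden]
    exact ((hlp.mono_left hU₀le).add (hinnerU0.const_mul 2)).add tendsto_const_nhds
  have hqp : ⟪p - q, p - q⟫_ℝ = ⟪p, p - q⟫_ℝ - ⟪q, p - q⟫_ℝ := inner_sub_left _ _ _
  have hnn : ⟪p - q, p - q⟫_ℝ = ‖p - q‖ ^ 2 := real_inner_self_eq_norm_sq _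
  have hpq0 : ‖p - q‖ ^ 2 = 0 := by
    rw [hnn] at hqp
    linarith
  have hqeqp : q = p := by
    have h1 : ‖p - q‖ = 0 := by nlinarith [norm_nonneg (p - q)]
    have h2 : p - q = 0 := norm_eq_zero.mp h1
    have := sub_eq_zero.mp h2
    exact this.symm
  rw [← hqeqp]
  exact hqweak v
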